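/- Let ε > 0, r ≥ 0 and set c = r/√ε. Then the leading half-space coefficient of the local part of the 2D Poisson volume potential is given exactly by (1/(2√π)) ∫₀^ε t^{-1/2} (∫_{−r}^∞ e^{−s²/(4t)} ds) dt = ε · A₀(c), where A₀(c) = (1/2)·(1 + erf(c/2) + (c/√π)·e^{−c²/4} − (c²/2)·erfc(c/2)). -/

import Mathlib

open MeasureTheory Real Set

/-- The error function `erf x = (2/√π) ∫₀^x e^{-s²} ds`. -/
noncomputable def erf (x : ℝ) : ℝ := (2 / Real.sqrt π) * ∫ s in (0 : ℝ)..x, Real.exp (-s ^ 2)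

/-- The complementary error function `erfc x = (2/√π) ∫_x^∞ e^{-s²} ds`. -/
noncomputable def erfc (x : ℝ) : ℝ := (2 / Real.sqrt π) * ∫ s in Set.Ioi x, Real.exp (-s ^ 2)

/-- The leading half-space coefficient of the local part of the 2D Poisson volume potential. -/
noncomputable def A₀ (c : ℝ) : ℝ :=
  (1 / 2) * (1 + erf (c / 2) + (c / Real.sqrt π) * Real.exp (-c ^ 2 / 4)
    - (c ^ 2 / 2) * erfc (c / 2))


lemma gauss_integrableOn (x : ℝ) : IntegrableOn (fun s : ℝ => Real.exp (-s ^ 2)) (Set.Ioi x) := by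
  have : Integrable (fun s : ℝ => Real.exp (-1 * s ^ 2)) := integrable_exp_neg_mul_sq one_pos
  simpa using this.integrableOn

lemma gauss_intervalIntegrable (a b : ℝ) :
    IntervalIntegrable (fun s : ℝ => Real.exp (-s ^ 2)) volume a b :=
  (Continuous.intervalIntegrable (by continuity) a b)

lemma gauss_Ioi0 : ∫ s in Set.Ioi (0:ℝ), Real.exp (-s ^ 2) = Real.sqrt π / 2 := by
  have := integral_gaussian_Ioi 1
  simpa using this

lemma erf_hasDerivAt (x : ℝ) :
    HasDerivAt erf ((2 / Real.sqrt π) * Real.exp (-x ^ 2)) x := by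
  have hcont : Continuous (fun s : ℝ => Real.exp (-s ^ 2)) := by continuity
  have h := intervalIntegral.integral_hasDerivAt_right (gauss_intervalIntegrable 0 x)
    (hcont.stronglyMeasurable.stronglyMeasurableAtFilter) (hcont.continuousAt)
  exact h.const_mul _

lemma erf_continuous : Continuous erf := by
  have : Continuous (fun x : ℝ => ∫ s in (0:ℝ)..x, Real.exp (-s ^ 2)) :=
    intervalIntegral.continuous_primitive (fun a b => gauss_intervalIntegrable a b) 0
  exact continuous_const.mul this


lemma erf_nonneg {x : ℝ} (hx : 0 ≤ x) : 0 ≤ erf x := by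
  unfold erf
  apply mul_nonneg (by positivity)
  apply intervalIntegral.integral_nonneg hx
  intro s _; positivity

lemma erf_le_int {x : ℝ} (hx : 0 ≤ x) :
    ∫ s in (0:ℝ)..x, Real.exp (-s ^ 2) ≤ Real.sqrt π / 2 := by
  rw [intervalIntegral.integral_of_le hx, ← gauss_Ioi0]
  apply setIntegral_mono_set (gauss_integrableOn 0)
  · filter_upwards with s using le_of_lt (Real.exp_pos _)
  · exact Filter.Eventually.of_forall (fun s hs => hs.1)

lemma erf_le_one {x : ℝ} (hx : 0 ≤ x) : erf x ≤ 1 := by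
  unfold erf
  have h := erf_le_int hx
  have hπ : (0:ℝ) < Real.sqrt π := Real.sqrt_pos.mpr Real.pi_pos
  calc (2 / Real.sqrt π) * ∫ s in (0:ℝ)..x, Real.exp (-s ^ 2)
      ≤ (2 / Real.sqrt π) * (Real.sqrt π / 2) := by
        apply mul_le_mul_of_nonneg_left h (by positivity)
    _ = 1 := by field_simp

lemma erfc_eq {x : ℝ} (hx : 0 ≤ x) : erfc x = 1 - erf x := by
  have hsplit : ∫ s in Set.Ioi (0:ℝ), Real.exp (-s ^ 2)
      = (∫ s in Set.Ioc (0:ℝ) x, Real.exp (-s ^ 2)) + ∫ s in Set.Ioi x, Real.exp (-s ^ 2) := by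
    rw [← setIntegral_union (Set.Ioc_disjoint_Ioi le_rfl) measurableSet_Ioi
      ((gauss_integrableOn 0).mono_set Set.Ioc_subset_Ioi_self) (gauss_integrableOn x),
      Set.Ioc_union_Ioi_eq_Ioi hx]
  have hπ : (0:ℝ) < Real.sqrt π := Real.sqrt_pos.mpr Real.pi_pos
  unfold erf erfc
  rw [intervalIntegral.integral_of_le hx]
  rw [gauss_Ioi0] at hsplit
  have : ∫ s in Set.Ioi x, Real.exp (-s ^ 2)
      = Real.sqrt π / 2 - ∫ s in Set.Ioc (0:ℝ) x, Real.exp (-s ^ 2) := by linarith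
  rw [this]; field_simp

lemma erf_tendsto_one : Filter.Tendsto erf Filter.atTop (nhds 1) := by
  have h : Filter.Tendsto (fun x : ℝ => ∫ s in (0:ℝ)..x, Real.exp (-s ^ 2)) Filter.atTop
      (nhds (∫ s in Set.Ioi (0:ℝ), Real.exp (-s ^ 2))) :=
    intervalIntegral_tendsto_integral_Ioi 0 (gauss_integrableOn 0) Filter.tendsto_id
  rw [gauss_Ioi0] at h
  have := h.const_mul (2 / Real.sqrt π)
  have hπ : (0:ℝ) < Real.sqrt π := Real.sqrt_pos.mpr Real.pi_pos
  have heq : (2 / Real.sqrt π) * (Real.sqrt π / 2) = 1 := by field_simp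
  unfold erf
  simpa [heq] using this

lemma int_eq_erf (y : ℝ) : ∫ s in (0:ℝ)..y, Real.exp (-s ^ 2) = (Real.sqrt π / 2) * erf y := by
  have hπ : (0:ℝ) < Real.sqrt π := Real.sqrt_pos.mpr Real.pi_pos
  unfold erf; field_simp

lemma inner_integral (r : ℝ) (hr : 0 ≤ r) {t : ℝ} (ht : 0 < t) :
    ∫ s in Set.Ioi (-r), Real.exp (-s ^ 2 / (4 * t))
      = Real.sqrt π * Real.sqrt t * (1 + erf (r / (2 * Real.sqrt t))) := by
  have hst : (0:ℝ) < Real.sqrt t := Real.sqrt_pos.mpr ht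
  have hst2 : Real.sqrt t ^ 2 = t := Real.sq_sqrt ht.le
  have hb : (0:ℝ) < (4*t)⁻¹ := by positivity
  have hform : ∀ s : ℝ, Real.exp (-s ^ 2 / (4 * t)) = Real.exp (-(4*t)⁻¹ * s ^ 2) := by
    intro s; ring_nf
  have hint : Integrable (fun s : ℝ => Real.exp (-s ^ 2 / (4 * t))) := by
    have := integrable_exp_neg_mul_sq hb
    simpa [hform] using this
  have hsplit : ∫ s in Set.Ioi (-r), Real.exp (-s ^ 2 / (4 * t))
      = (∫ s in Set.Ioc (-r) 0, Real.exp (-s ^ 2 / (4 * t)))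
        + ∫ s in Set.Ioi (0:ℝ), Real.exp (-s ^ 2 / (4 * t)) := by
    rw [← setIntegral_union (Set.Ioc_disjoint_Ioi le_rfl) measurableSet_Ioi
      hint.integrableOn hint.integrableOn, Set.Ioc_union_Ioi_eq_Ioi (by linarith)]
  have hIoi : ∫ s in Set.Ioi (0:ℝ), Real.exp (-s ^ 2 / (4 * t)) = Real.sqrt π * Real.sqrt t := by
    simp_rw [hform]
    rw [integral_gaussian_Ioi]
    rw [show π / (4*t)⁻¹ = π * (2^2*t) by rw [div_eq_mul_inv, inv_inv]; ring,
      Real.sqrt_mul Real.pi_pos.le,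
      Real.sqrt_mul (by positivity : (0:ℝ) ≤ 2^2), Real.sqrt_sq (by norm_num : (0:ℝ) ≤ 2)]
    ring
  have hIoc : ∫ s in Set.Ioc (-r) 0, Real.exp (-s ^ 2 / (4 * t))
      = Real.sqrt π * Real.sqrt t * erf (r / (2 * Real.sqrt t)) := by
    rw [← intervalIntegral.integral_of_le (by linarith : -r ≤ 0)]
    have hneg : ∫ s in (-r)..(0:ℝ), Real.exp (-s ^ 2 / (4 * t))
        = ∫ s in (0:ℝ)..r, Real.exp (-s ^ 2 / (4 * t)) := by
      rw [show (∫ s in (0:ℝ)..r, Real.exp (-s ^ 2 / (4 * t)))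
          = ∫ s in (0:ℝ)..r, Real.exp (-(-s) ^ 2 / (4 * t)) by simp,
        intervalIntegral.integral_comp_neg (fun s => Real.exp (-s ^ 2 / (4 * t)))]
      simp
    rw [hneg]
    have hcomp : ∀ s : ℝ, Real.exp (-s ^ 2 / (4 * t))
        = (fun v => Real.exp (-v ^ 2)) (s / (2 * Real.sqrt t)) := by
      intro s
      have : (s / (2 * Real.sqrt t)) ^ 2 = s ^ 2 / (4 * t) := by
        rw [div_pow, mul_pow, hst2]; norm_num
      simp only [this, neg_div]
    simp_rw [hcomp]
    rw [intervalIntegral.integral_comp_div (fun v => Real.exp (-v ^ 2)) (by positivity)]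
    simp only [zero_div, smul_eq_mul]
    rw [int_eq_erf]
    ring
  rw [hsplit, hIoc, hIoi]; ring

noncomputable def Gfun (r t : ℝ) : ℝ :=
  if t ≤ 0 then 0 else
    t + t * erf (r / (2 * Real.sqrt t))
      + (r / Real.sqrt π) * (Real.sqrt t * Real.exp (-r ^ 2 / (4 * t)))
      - (r ^ 2 / 2) * (1 - erf (r / (2 * Real.sqrt t)))

lemma integrand_integrable (r ε : ℝ) (hr : 0 ≤ r) (hε : 0 < ε) :
    IntervalIntegrable (fun t => 1 + erf (r / (2 * Real.sqrt t))) volume 0 ε := by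
  rw [intervalIntegrable_iff_integrableOn_Ioc_of_le hε.le]
  apply Measure.integrableOn_of_bounded (M := 1 + 1)
  · exact (measure_Ioc_lt_top).ne
  · apply Measurable.aestronglyMeasurable
    apply Measurable.const_add
    exact erf_continuous.measurable.comp (measurable_const.div
      ((continuous_const.mul Real.continuous_sqrt).measurable))
  · rw [MeasureTheory.ae_restrict_iff' measurableSet_Ioc]
    filter_upwards with t ht
    have h : 0 ≤ r / (2 * Real.sqrt t) := div_nonneg hr (by positivity)
    rw [Real.norm_eq_abs, abs_le]
    constructor
    · nlinarith [erf_nonneg h]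
    · nlinarith [erf_le_one h]

lemma Gfun_hasDerivAt (r : ℝ) {x : ℝ} (hx : 0 < x) :
    HasDerivAt (Gfun r) (1 + erf (r / (2 * Real.sqrt x))) x := by
  have hS : (0:ℝ) < Real.sqrt x := Real.sqrt_pos.mpr hx
  have hS2 : Real.sqrt x ^ 2 = x := Real.sq_sqrt hx.le
  have hP : (0:ℝ) < Real.sqrt π := Real.sqrt_pos.mpr Real.pi_pos
  -- derivative of sqrt
  have hsq : HasDerivAt Real.sqrt (1 / (2 * Real.sqrt x)) x := Real.hasDerivAt_sqrt hx.ne'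
  have hden : HasDerivAt (fun t => 2 * Real.sqrt t) (2 * (1 / (2 * Real.sqrt x))) x :=
    hsq.const_mul 2
  have ha : HasDerivAt (fun t => r / (2 * Real.sqrt t))
      ((0 * (2 * Real.sqrt x) - r * (2 * (1 / (2 * Real.sqrt x)))) / (2 * Real.sqrt x) ^ 2) x :=
    (hasDerivAt_const x r).div hden (by positivity)
  have herf : HasDerivAt (fun t => erf (r / (2 * Real.sqrt t)))
      ((2 / Real.sqrt π) * Real.exp (-(r / (2 * Real.sqrt x)) ^ 2) *
        ((0 * (2 * Real.sqrt x) - r * (2 * (1 / (2 * Real.sqrt x)))) / (2 * Real.sqrt x) ^ 2)) x :=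
    by have h := (erf_hasDerivAt (r / (2 * Real.sqrt x))).comp x ha; exact h
  have hE : HasDerivAt (fun t => -r ^ 2 / (4 * t))
      ((0 * (4 * x) - (-r ^ 2) * 4) / (4 * x) ^ 2) x :=
    (hasDerivAt_const x (-r ^ 2)).div
      (by simpa using (hasDerivAt_id x).const_mul (4:ℝ)) (by positivity)
  have hexp : HasDerivAt (fun t => Real.exp (-r ^ 2 / (4 * t)))
      (Real.exp (-r ^ 2 / (4 * x)) * ((0 * (4 * x) - (-r ^ 2) * 4) / (4 * x) ^ 2)) x := by
    have := hE.exp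
    simpa [mul_comm] using this
  have hT1 : HasDerivAt (fun t => t * erf (r / (2 * Real.sqrt t)))
      (1 * erf (r / (2 * Real.sqrt x)) + x *
        ((2 / Real.sqrt π) * Real.exp (-(r / (2 * Real.sqrt x)) ^ 2) *
        ((0 * (2 * Real.sqrt x) - r * (2 * (1 / (2 * Real.sqrt x)))) / (2 * Real.sqrt x) ^ 2))) x :=
    (hasDerivAt_id x).mul herf
  have hT2 : HasDerivAt
      (fun t => (r / Real.sqrt π) * (Real.sqrt t * Real.exp (-r ^ 2 / (4 * t))))
      ((r / Real.sqrt π) * ((1 / (2 * Real.sqrt x)) * Real.exp (-r ^ 2 / (4 * x))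
        + Real.sqrt x * (Real.exp (-r ^ 2 / (4 * x)) *
          ((0 * (4 * x) - (-r ^ 2) * 4) / (4 * x) ^ 2)))) x :=
    (hsq.mul hexp).const_mul _
  have hT3 : HasDerivAt
      (fun t => (r ^ 2 / 2) * (1 - erf (r / (2 * Real.sqrt t))))
      ((r ^ 2 / 2) * (0 - ((2 / Real.sqrt π) * Real.exp (-(r / (2 * Real.sqrt x)) ^ 2) *
        ((0 * (2 * Real.sqrt x) - r * (2 * (1 / (2 * Real.sqrt x)))) / (2 * Real.sqrt x) ^ 2)))) x :=
    ((hasDerivAt_const x (1:ℝ)).sub herf).const_mul _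
  have total := (((hasDerivAt_id x).add hT1).add hT2).sub hT3
  have heq : Gfun r =ᶠ[nhds x] (fun t => t + t * erf (r / (2 * Real.sqrt t))
      + (r / Real.sqrt π) * (Real.sqrt t * Real.exp (-r ^ 2 / (4 * t)))
      - (r ^ 2 / 2) * (1 - erf (r / (2 * Real.sqrt t)))) := by
    filter_upwards [lt_mem_nhds hx] with t ht
    simp [Gfun, not_le.mpr ht]
  have main := HasDerivAt.congr_of_eventuallyEq (by exact total) heq
  refine main.congr_deriv ?_
  have hexpeq : Real.exp (-(r / (2 * Real.sqrt x)) ^ 2) = Real.exp (-r ^ 2 / (4 * x)) := by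
    congr 1
    rw [div_pow, mul_pow, hS2]
    ring
  rw [hexpeq]
  set S := Real.sqrt x with hSdef
  rw [← hS2]
  field_simp
  ring

lemma Gfun_tendsto_zero (r : ℝ) (hr : 0 ≤ r) :
    Filter.Tendsto (Gfun r) (nhdsWithin 0 (Set.Ioi 0)) (nhds 0) := by
  have hbody : ∀ t ∈ Set.Ioi (0:ℝ), Gfun r t
      = t + t * erf (r / (2 * Real.sqrt t))
        + (r / Real.sqrt π) * (Real.sqrt t * Real.exp (-r ^ 2 / (4 * t)))
        - (r ^ 2 / 2) * (1 - erf (r / (2 * Real.sqrt t))) := by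
    intro t ht
    simp [Gfun, not_le.mpr (Set.mem_Ioi.mp ht)]
  -- term 1 : t → 0
  have h1 : Filter.Tendsto (fun t : ℝ => t) (nhdsWithin 0 (Set.Ioi 0)) (nhds 0) :=
    Filter.tendsto_id.mono_left nhdsWithin_le_nhds
  -- term 2 : t * erf (...) → 0 by squeeze
  have h2 : Filter.Tendsto (fun t : ℝ => t * erf (r / (2 * Real.sqrt t)))
      (nhdsWithin 0 (Set.Ioi 0)) (nhds 0) := by
    apply squeeze_zero' (Filter.eventually_of_mem self_mem_nhdsWithin ?_) (Filter.eventually_of_mem self_mem_nhdsWithin ?_) h1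
    · intro t ht
      have ht' : (0:ℝ) < t := ht
      exact mul_nonneg ht'.le (erf_nonneg (div_nonneg hr (by positivity)))
    · intro t ht
      have ht' : (0:ℝ) < t := ht
      nlinarith [erf_le_one (div_nonneg hr (by positivity : (0:ℝ) ≤ 2 * Real.sqrt t))]
  -- term 3
  have hsqrt0 : Filter.Tendsto (fun t : ℝ => Real.sqrt t) (nhdsWithin 0 (Set.Ioi 0)) (nhds 0) := by
    have := Real.continuous_sqrt.tendsto 0
    simpa using this.mono_left nhdsWithin_le_nhds
  have h3 : Filter.Tendsto
      (fun t : ℝ => (r / Real.sqrt π) * (Real.sqrt t * Real.exp (-r ^ 2 / (4 * t))))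
      (nhdsWithin 0 (Set.Ioi 0)) (nhds 0) := by
    have hb : Filter.Tendsto (fun t : ℝ => (r / Real.sqrt π) * Real.sqrt t)
        (nhdsWithin 0 (Set.Ioi 0)) (nhds 0) := by
      simpa using hsqrt0.const_mul (r / Real.sqrt π)
    apply squeeze_zero' (Filter.eventually_of_mem self_mem_nhdsWithin ?_) (Filter.eventually_of_mem self_mem_nhdsWithin ?_) hb
    · intro t ht
      have ht' : (0:ℝ) < t := ht
      have hP : (0:ℝ) < Real.sqrt π := Real.sqrt_pos.mpr Real.pi_pos
      positivity
    · intro t ht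
      have ht' : (0:ℝ) < t := ht
      have hP : (0:ℝ) < Real.sqrt π := Real.sqrt_pos.mpr Real.pi_pos
      have hexp : Real.exp (-r ^ 2 / (4 * t)) ≤ 1 := by
        rw [Real.exp_le_one_iff]
        apply div_nonpos_of_nonpos_of_nonneg (neg_nonpos.mpr (by positivity)) (by positivity)
      have hst : (0:ℝ) ≤ Real.sqrt t := Real.sqrt_nonneg t
      have hrP : (0:ℝ) ≤ r / Real.sqrt π := div_nonneg hr hP.le
      exact mul_le_mul_of_nonneg_left (mul_le_of_le_one_right hst hexp) hrP
  -- term 4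
  have h4 : Filter.Tendsto
      (fun t : ℝ => (r ^ 2 / 2) * (1 - erf (r / (2 * Real.sqrt t))))
      (nhdsWithin 0 (Set.Ioi 0)) (nhds 0) := by
    rcases eq_or_lt_of_le hr with h0 | hrpos
    · simp [← h0]
    · have hatop : Filter.Tendsto (fun t : ℝ => r / (2 * Real.sqrt t))
          (nhdsWithin 0 (Set.Ioi 0)) Filter.atTop := by
        have hm : Filter.Tendsto (fun t : ℝ => 2 * Real.sqrt t)
            (nhdsWithin 0 (Set.Ioi 0)) (nhdsWithin 0 (Set.Ioi 0)) := by
          rw [tendsto_nhdsWithin_iff]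
          constructor
          · simpa using hsqrt0.const_mul (2:ℝ)
          · exact Filter.eventually_of_mem self_mem_nhdsWithin fun t ht => by
              have : (0:ℝ) < t := ht
              have : (0:ℝ) < Real.sqrt t := Real.sqrt_pos.mpr this
              exact Set.mem_Ioi.mpr (by positivity)
        have hinv : Filter.Tendsto (fun t : ℝ => (2 * Real.sqrt t)⁻¹)
            (nhdsWithin 0 (Set.Ioi 0)) Filter.atTop :=
          tendsto_inv_nhdsGT_zero.comp hm
        simpa [div_eq_mul_inv] using hinv.const_mul_atTop hrpos
      have herf1 : Filter.Tendsto (fun t : ℝ => erf (r / (2 * Real.sqrt t)))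
          (nhdsWithin 0 (Set.Ioi 0)) (nhds 1) := erf_tendsto_one.comp hatop
      have : Filter.Tendsto (fun t : ℝ => (r ^ 2 / 2) * (1 - erf (r / (2 * Real.sqrt t))))
          (nhdsWithin 0 (Set.Ioi 0)) (nhds ((r ^ 2 / 2) * (1 - 1))) :=
        (Filter.Tendsto.const_sub 1 herf1).const_mul _
      simpa using this
  have := ((h1.add h2).add h3).sub h4
  simp only [add_zero, sub_zero, zero_add] at this
  apply this.congr'
  filter_upwards [self_mem_nhdsWithin] with t ht
  exact (hbody t ht).symm

lemma Gfun_zero (r : ℝ) : Gfun r 0 = 0 := by simp [Gfun]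

lemma Gfun_continuousOn (r ε : ℝ) (hr : 0 ≤ r) (hε : 0 < ε) :
    ContinuousOn (Gfun r) (Set.Icc 0 ε) := by
  intro x hx
  rcases eq_or_lt_of_le hx.1 with h0 | hpos
  · rw [← h0]
    unfold ContinuousWithinAt
    rw [Gfun_zero]
    apply Filter.Tendsto.mono_left _ (nhdsWithin_mono 0 Set.Icc_subset_Ici_self)
    have hIci : Set.Ici (0:ℝ) = {0} ∪ Set.Ioi 0 := by
      ext y
      simp [le_iff_lt_or_eq, eq_comm, or_comm]
    rw [hIci, nhdsWithin_union, nhdsWithin_singleton, Filter.tendsto_sup]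
    refine ⟨?_, Gfun_tendsto_zero r hr⟩
    have := tendsto_pure_nhds (Gfun r) 0
    rwa [Gfun_zero] at this
  · exact ((Gfun_hasDerivAt r hpos).continuousAt).continuousWithinAt

lemma key_integral (r ε : ℝ) (hr : 0 ≤ r) (hε : 0 < ε) :
    ∫ t in Set.Ioc (0:ℝ) ε, (1 + erf (r / (2 * Real.sqrt t))) = Gfun r ε := by
  rw [← intervalIntegral.integral_of_le hε.le]
  rw [intervalIntegral.integral_eq_sub_of_hasDeriv_right_of_le hε.le
    (Gfun_continuousOn r ε hr hε)
    (fun x hx => ((Gfun_hasDerivAt r hx.1).hasDerivWithinAt))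
    (integrand_integrable r ε hr hε)]
  rw [Gfun_zero, sub_zero]

/-- The leading half-space contribution of the local part of the 2D Poisson volume potential
equals `ε · A₀(c)` with `c = r/√ε`. -/
theorem halfspace_leading_coefficient
    (ε : ℝ) (hε : 0 < ε) (r : ℝ) (hr : 0 ≤ r) (c : ℝ) (hc : c = r / Real.sqrt ε) :
    (1 / (2 * Real.sqrt π)) *
        ∫ t in Set.Ioc (0 : ℝ) ε,
          t ^ (-(1 : ℝ) / 2) * ∫ s in Set.Ioi (-r), Real.exp (-s ^ 2 / (4 * t))
      = ε * A₀ c := by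
  have hP : (0:ℝ) < Real.sqrt π := Real.sqrt_pos.mpr Real.pi_pos
  have hSε : (0:ℝ) < Real.sqrt ε := Real.sqrt_pos.mpr hε
  have hS2 : Real.sqrt ε ^ 2 = ε := Real.sq_sqrt hε.le
  have hrc : r = c * Real.sqrt ε := by rw [hc]; field_simp
  have hcnn : 0 ≤ c := by rw [hc]; positivity
  have hcongr : (∫ t in Set.Ioc (0 : ℝ) ε,
        t ^ (-(1 : ℝ) / 2) * ∫ s in Set.Ioi (-r), Real.exp (-s ^ 2 / (4 * t)))
      = ∫ t in Set.Ioc (0 : ℝ) ε, Real.sqrt π * (1 + erf (r / (2 * Real.sqrt t))) := by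
    apply setIntegral_congr_fun measurableSet_Ioc
    intro t ht
    simp only
    rw [inner_integral r hr ht.1]
    have h1 : t ^ (-(1:ℝ)/2) * Real.sqrt t = 1 := by
      rw [Real.sqrt_eq_rpow, ← Real.rpow_add ht.1]
      norm_num
    calc t ^ (-(1:ℝ)/2) * (Real.sqrt π * Real.sqrt t * (1 + erf (r / (2 * Real.sqrt t))))
        = (t ^ (-(1:ℝ)/2) * Real.sqrt t) * (Real.sqrt π * (1 + erf (r / (2 * Real.sqrt t)))) := by
          ring
      _ = Real.sqrt π * (1 + erf (r / (2 * Real.sqrt t))) := by rw [h1, one_mul]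
  rw [hcongr, integral_const_mul, key_integral r ε hr hε]
  have hGε : Gfun r ε = ε + ε * erf (r / (2 * Real.sqrt ε))
      + (r / Real.sqrt π) * (Real.sqrt ε * Real.exp (-r ^ 2 / (4 * ε)))
      - (r ^ 2 / 2) * (1 - erf (r / (2 * Real.sqrt ε))) := by
    simp [Gfun, not_le.mpr hε]
  have harg : r / (2 * Real.sqrt ε) = c / 2 := by
    rw [hrc]; field_simp
  have hexparg : -r ^ 2 / (4 * ε) = -c ^ 2 / 4 := by
    rw [hrc, mul_pow, hS2]; field_simp
  rw [hGε, harg, hexparg, A₀, erfc_eq (by positivity : (0:ℝ) ≤ c / 2), hrc]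
  set S := Real.sqrt ε with hSdef
  rw [← hS2]
  field_simp
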